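/- Let λ_min > 0 be the smallest eigenvalue of the positive definite matrix C = XᵀX, and let β ∈ ℝᵖ with β ≠ 0. Define f(k) = k²·βᵀ(C + kI)⁻²β + σ²·Σⱼ λⱼ/(λⱼ + k)². Then f is differentiable at 0 with f'(0) = −2σ²·Σⱼ 1/λⱼ² < 0; hence there exists k > 0 with f(k) < f(0). -/

import Mathlib

open Matrix

theorem hoerl_kennard_existence (p : ℕ)
    (C : Matrix (Fin p) (Fin p) ℝ) (hC : C.PosDef)
    (β : Fin p → ℝ) (hβ : β ≠ 0) (σ2 : ℝ) (hσ : 0 < σ2)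
    (f : ℝ → ℝ)
    (hf : f = fun k =>
      k^2 * (β ⬝ᵥ (((C + k • (1 : Matrix (Fin p) (Fin p) ℝ))⁻¹ *
        (C + k • (1 : Matrix (Fin p) (Fin p) ℝ))⁻¹) *ᵥ β))
      + σ2 * ∑ j, hC.1.eigenvalues j / (hC.1.eigenvalues j + k)^2) :
    HasDerivAt f (-2 * σ2 * ∑ j, 1 / (hC.1.eigenvalues j)^2) 0 ∧
    (p ≠ 0 → -2 * σ2 * ∑ j, 1 / (hC.1.eigenvalues j)^2 < 0) ∧
    (p ≠ 0 → ∃ k > 0, f k < f 0) := by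
  have hlampos : ∀ j, 0 < hC.1.eigenvalues j := hC.eigenvalues_pos
  set q : ℝ → ℝ := fun k => β ⬝ᵥ (((C + k • (1 : Matrix (Fin p) (Fin p) ℝ))⁻¹ *
        (C + k • (1 : Matrix (Fin p) (Fin p) ℝ))⁻¹) *ᵥ β) with hq
  -- continuity of q at 0
  have hqc : ContinuousAt q 0 := by
    have h1 : ContinuousAt (fun k : ℝ => C + k • (1 : Matrix (Fin p) (Fin p) ℝ)) 0 := by
      fun_prop
    have h2 : ContinuousAt Inv.inv ((fun k : ℝ => C + k • (1 : Matrix (Fin p) (Fin p) ℝ)) 0) := by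
      apply continuousAt_matrix_inv
      have hdet : ((fun k : ℝ => C + k • (1 : Matrix (Fin p) (Fin p) ℝ)) 0).det ≠ 0 := by
        simpa using ne_of_gt hC.det_pos
      rw [show (Ring.inverse : ℝ → ℝ) = Inv.inv from Ring.inverse_eq_inv']
      exact continuousAt_inv₀ hdet
    have hM : ContinuousAt (fun k : ℝ => (C + k • (1 : Matrix (Fin p) (Fin p) ℝ))⁻¹) 0 :=
      ContinuousAt.comp (g := Inv.inv)
        (f := fun k : ℝ => C + k • (1 : Matrix (Fin p) (Fin p) ℝ)) h2 h1
    have hΦ : Continuous (fun A : Matrix (Fin p) (Fin p) ℝ => β ⬝ᵥ (A * A) *ᵥ β) :=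
      continuous_const.dotProduct
        (((continuous_id.matrix_mul continuous_id).matrix_mulVec continuous_const))
    exact hΦ.continuousAt.comp hM
  -- derivative of the first term
  have hg : HasDerivAt (fun k : ℝ => k^2 * q k) 0 0 := by
    rw [hasDerivAt_iff_tendsto_slope]
    have ht : Filter.Tendsto (fun k : ℝ => k * q k) (nhdsWithin 0 {(0:ℝ)}ᶜ) (nhds 0) := by
      have := (continuousAt_id.mul hqc)
      exact (by simpa using this.tendsto.mono_left nhdsWithin_le_nhds : Filter.Tendsto (id * q) (nhdsWithin 0 {(0:ℝ)}ᶜ) (nhds 0))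
    refine ht.congr' ?_
    filter_upwards [self_mem_nhdsWithin] with k hk
    have hk0 : k ≠ 0 := hk
    simp only [slope_def_field]
    field_simp
    ring
  -- derivative of the sum term
  have hsum : HasDerivAt (fun k : ℝ => σ2 * ∑ j, hC.1.eigenvalues j / (hC.1.eigenvalues j + k)^2)
      (σ2 * ∑ j, -2 / (hC.1.eigenvalues j)^2) 0 := by
    apply HasDerivAt.const_mul
    apply HasDerivAt.fun_sum
    intro j _
    set l := hC.1.eigenvalues j with hl
    have hl0 : l ≠ 0 := ne_of_gt (hlampos j)
    have h1 : HasDerivAt (fun k : ℝ => l + k) 1 0 := (hasDerivAt_id 0).const_add l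
    have h2 := h1.pow 2
    have h3 := h2.inv (show (l + (0:ℝ))^2 ≠ 0 from pow_ne_zero 2 (by simpa using hl0))
    have h4 := h3.const_mul l
    have h5 : HasDerivAt (fun k : ℝ => l * ((l + k)^2)⁻¹) (-2 / l^2) 0 := by
      refine h4.congr_deriv ?_
      simp only [Pi.pow_apply, add_zero]
      field_simp
      ring
    simpa [div_eq_mul_inv] using h5
  have hd : HasDerivAt f (-2 * σ2 * ∑ j, 1 / (hC.1.eigenvalues j)^2) 0 := by
    have := hg.add hsum
    rw [hf]
    refine this.congr_deriv ?_
    rw [Finset.mul_sum, Finset.mul_sum, zero_add]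
    exact Finset.sum_congr rfl fun j _ => by ring
  refine ⟨hd, ?_, ?_⟩
  · intro hp
    have hpos : 0 < ∑ j, 1 / (hC.1.eigenvalues j)^2 := by
      apply Finset.sum_pos
      · intro j _
        exact one_div_pos.mpr (pow_pos (hlampos j) 2)
      · simpa [Finset.univ_nonempty_iff] using Fin.pos_iff_nonempty.mp (Nat.pos_of_ne_zero hp)
    nlinarith
  · intro hp
    have hpos : 0 < ∑ j, 1 / (hC.1.eigenvalues j)^2 := by
      apply Finset.sum_pos
      · intro j _
        exact one_div_pos.mpr (pow_pos (hlampos j) 2)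
      · simpa [Finset.univ_nonempty_iff] using Fin.pos_iff_nonempty.mp (Nat.pos_of_ne_zero hp)
    have hneg : -2 * σ2 * ∑ j, 1 / (hC.1.eigenvalues j)^2 < 0 := by nlinarith
    have hts := hasDerivAt_iff_tendsto_slope.mp hd
    have hev : ∀ᶠ k in nhdsWithin 0 {(0:ℝ)}ᶜ, slope f 0 k < 0 :=
      hts.eventually (Filter.Tendsto.eventually_lt_const hneg Filter.tendsto_id)
    have hle : nhdsWithin (0:ℝ) (Set.Ioi 0) ≤ nhdsWithin 0 {(0:ℝ)}ᶜ := by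
      apply nhdsWithin_mono
      intro x hx
      exact ne_of_gt hx
    have hev2 : ∀ᶠ k in nhdsWithin (0:ℝ) (Set.Ioi 0), slope f 0 k < 0 ∧ 0 < k := by
      filter_upwards [hev.filter_mono hle, self_mem_nhdsWithin] with k h1 h2
      exact ⟨h1, h2⟩
    obtain ⟨k, hk1, hk2⟩ := hev2.exists
    refine ⟨k, hk2, ?_⟩
    have : (f k - f 0) / k < 0 := by simpa [slope_def_field] using hk1
    have := div_neg_iff.mp this
    rcases this with ⟨h, h'⟩ | ⟨h, h'⟩
    · linarith
    · linarith
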